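/- arXiv:2402.13902 — 4 statements merged into one kernel-verified Lean document; each statement's English description precedes it below -/
import Mathlib

section
/- For positive integers k_1, ..., k_d with k_1 ≥ 2 and k_d ≥ 2, and z ∈ ℂ \ ℤ, the multiple series Σ_{m_1 < m_2 < ... < m_d, m_i ∈ ℤ} 1/((z+m_1)^{k_1} ⋯ (z+m_d)^{k_d}) converges absolutely. -/
open Finset

/-- One-dimensional summability: `(1 + |m|) ^ (-q)` is summable over `ℤ` for `q > 1`. -/
lemma aux_summable_int (q : ℝ) (hq : 1 < q) :
    Summable (fun m : ℤ => ((1 : ℝ) + |(m : ℝ)|) ^ (-q)) := by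
  have h := (Real.summable_one_div_int_add_rpow (1 / 2) q).mpr hq
  refine h.of_nonneg_of_le (fun m => ?_) (fun m => ?_)
  · positivity
  · have h1 : (0 : ℝ) < |(m : ℝ) + 1 / 2| := by
      rw [abs_pos]
      intro h
      have h2 : ((2 * m + 1 : ℤ) : ℝ) = 0 := by push_cast; linarith
      have h3 : (2 * m + 1 : ℤ) = 0 := by exact_mod_cast h2
      omega
    have h2 : |(m : ℝ) + 1 / 2| ≤ 1 + |(m : ℝ)| := by
      calc |(m : ℝ) + 1 / 2| ≤ |(m : ℝ)| + |(1 : ℝ) / 2| := abs_add_le _ _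
        _ ≤ 1 + |(m : ℝ)| := by
            rw [abs_of_nonneg (by norm_num : (0 : ℝ) ≤ 1 / 2)]; linarith
    rw [one_div, ← Real.rpow_neg h1.le]
    exact Real.rpow_le_rpow_of_nonpos h1 h2 (by linarith)

/-- Multi-dimensional summability of products of `(1 + |m i|) ^ (-q)`. -/
lemma aux_summable_pi (n : ℕ) (q : ℝ) (hq : 1 < q) :
    Summable (fun m : Fin n → ℤ => ∏ i, ((1 : ℝ) + |(m i : ℝ)|) ^ (-q)) := by
  induction n with
  | zero => exact Summable.of_finite
  | succ n ih =>
    rw [← (Fin.consEquiv fun _ : Fin (n + 1) => ℤ).summable_iff]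
    have h := (aux_summable_int q hq).mul_of_nonneg ih
      (fun m => by positivity) (fun m => Finset.prod_nonneg fun i _ => by positivity)
    refine h.congr fun p => ?_
    simp [Function.comp, Fin.consEquiv, Fin.prod_univ_succ, Fin.cons_zero, Fin.cons_succ]

/-- The distance from `z` to integers grows linearly: there is `δ > 0` with
`δ * (1 + |m|) ≤ |z + m|` for all integers `m`. -/
lemma aux_delta (z : ℂ) (hz : ∀ m : ℤ, z ≠ m) :
    ∃ δ : ℝ, 0 < δ ∧ ∀ m : ℤ, δ * (1 + |(m : ℝ)|) ≤ ‖z + m‖ := by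
  set R : ℝ := ‖z‖ with hR
  have hR0 : 0 ≤ R := norm_nonneg z
  set N : ℕ := ⌈2 * R + 2⌉₊ with hN
  set S : Finset ℤ := Finset.Icc (-(N : ℤ)) N with hS
  have hSne : S.Nonempty := ⟨0, by simp [hS]⟩
  set δ₀ : ℝ := S.inf' hSne (fun m => ‖z + m‖ / (1 + |(m : ℝ)|)) with hδ₀
  have hδ₀pos : 0 < δ₀ := by
    rw [hδ₀, Finset.lt_inf'_iff]
    intro m _
    have h1 : 0 < ‖z + m‖ := by
      rw [norm_pos_iff]
      intro h
      exact hz (-m) (by push_cast; linear_combination h)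
    positivity
  refine ⟨min δ₀ (1 / 2), by positivity, fun m => ?_⟩
  rcases le_or_gt (|(m : ℝ)|) N with hm | hm
  · have hmN : |m| ≤ (N : ℤ) := by
      have h' : ((|m| : ℤ) : ℝ) ≤ ((N : ℤ) : ℝ) := by
        rw [Int.cast_abs]; push_cast; exact_mod_cast hm
      exact_mod_cast h'
    have hmS : m ∈ S := by
      rw [hS, Finset.mem_Icc]
      exact ⟨by linarith [neg_abs_le m], by linarith [le_abs_self m]⟩
    have h1 : δ₀ ≤ ‖z + m‖ / (1 + |(m : ℝ)|) :=
      Finset.inf'_le _ hmS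
    have h2 : (0 : ℝ) < 1 + |(m : ℝ)| := by positivity
    calc min δ₀ (1 / 2) * (1 + |(m : ℝ)|) ≤ δ₀ * (1 + |(m : ℝ)|) :=
          mul_le_mul_of_nonneg_right (min_le_left _ _) h2.le
      _ ≤ ‖z + m‖ / (1 + |(m : ℝ)|) * (1 + |(m : ℝ)|) :=
          mul_le_mul_of_nonneg_right h1 h2.le
      _ = ‖z + m‖ := div_mul_cancel₀ _ h2.ne'
  · have hm2 : 2 * R + 2 ≤ |(m : ℝ)| := le_trans (Nat.le_ceil _) hm.le
    have hcm : ‖(m : ℂ)‖ = |(m : ℝ)| := by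
      exact Complex.norm_intCast m
    have h1 : |(m : ℝ)| - R ≤ ‖z + m‖ := by
      have htri := norm_add_le (-z) (z + (m : ℂ))
      rw [neg_add_cancel_left, norm_neg] at htri
      rw [← hcm, hR]
      linarith
    calc min δ₀ (1 / 2) * (1 + |(m : ℝ)|) ≤ 1 / 2 * (1 + |(m : ℝ)|) :=
          mul_le_mul_of_nonneg_right (min_le_right _ _) (by positivity)
      _ ≤ |(m : ℝ)| - R := by nlinarith
      _ ≤ ‖z + m‖ := h1

/-- Core inequality: exponent redistribution on strictly monotone tuples. -/
lemma aux_redistribute (d : ℕ) (k : Fin (d + 1) → ℕ)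
    (hpos : ∀ i, 1 ≤ k i) (hfirst : 2 ≤ k 0) (hlast : 2 ≤ k (Fin.last d))
    (m : Fin (d + 1) → ℤ) (hm : StrictMono m) :
    ∏ i, ((1 : ℝ) + |(m i : ℝ)|) ^ ((1 : ℝ) + 1 / ((d : ℝ) + 1)) ≤
      ∏ i, ((1 : ℝ) + |(m i : ℝ)|) ^ (k i) := by
  set u : Fin (d + 1) → ℝ := fun i => 1 + |(m i : ℝ)| with hu
  have hu1 : ∀ i, (1 : ℝ) ≤ u i := fun i => by
    simp only [hu, le_add_iff_nonneg_right]; positivity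
  have hu0 : ∀ i, (0 : ℝ) < u i := fun i => lt_of_lt_of_le one_pos (hu1 i)
  set M : ℝ := max (u 0) (u (Fin.last d)) with hM
  have huM : ∀ i, u i ≤ M := by
    intro i
    have h0 : ((m 0 : ℤ) : ℝ) ≤ ((m i : ℤ) : ℝ) := by
      exact_mod_cast hm.monotone (Fin.zero_le i)
    have hl : ((m i : ℤ) : ℝ) ≤ ((m (Fin.last d) : ℤ) : ℝ) := by
      exact_mod_cast hm.monotone (Fin.le_last i)
    have habs := abs_le_max_abs_abs h0 hl
    rcases le_max_iff.mp habs with h | h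
    · exact le_max_of_le_left (by simp only [hu]; linarith)
    · exact le_max_of_le_right (by simp only [hu]; linarith)
  set ε : ℝ := 1 / ((d : ℝ) + 1) with hε
  have hε0 : 0 < ε := by positivity
  -- Step 1 : ∏ u i ^ (1+ε) ≤ (∏ u i) * M
  have step1 : ∏ i, u i ^ ((1 : ℝ) + ε) ≤ (∏ i, u i) * M := by
    have h1 : ∀ i : Fin (d + 1), u i ^ ((1 : ℝ) + ε) ≤ u i * M ^ ε := by
      intro i
      rw [Real.rpow_add (hu0 i), Real.rpow_one]
      exact mul_le_mul_of_nonneg_left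
        (Real.rpow_le_rpow (hu0 i).le (huM i) hε0.le) (hu0 i).le
    calc ∏ i, u i ^ ((1 : ℝ) + ε) ≤ ∏ i, (u i * M ^ ε) :=
          Finset.prod_le_prod (fun i _ => by positivity) (fun i _ => h1 i)
      _ = (∏ i, u i) * (M ^ ε) ^ (d + 1 : ℕ) := by
          rw [Finset.prod_mul_distrib, Finset.prod_const, Finset.card_univ, Fintype.card_fin]
      _ = (∏ i, u i) * M := by
          have hM1 : (1 : ℝ) ≤ M := le_trans (hu1 0) (le_max_left _ _)
          rw [← Real.rpow_natCast (M ^ ε) (d + 1), ← Real.rpow_mul (by linarith)]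
          congr 1
          rw [hε]
          push_cast
          rw [div_mul_cancel₀, Real.rpow_one]
          positivity
  -- Step 2 : (∏ u i) * M ≤ ∏ u i ^ k i
  have step2 : (∏ i, u i) * M ≤ ∏ i, u i ^ (k i) := by
    have key : ∀ j : Fin (d + 1), 2 ≤ k j →
        (∏ i, u i) * u j ≤ ∏ i, u i ^ (k i) := by
      intro j hj
      have hrw : (∏ i, u i) * u j = ∏ i, (u i * if i = j then u i else 1) := by
        rw [Finset.prod_mul_distrib, Finset.prod_ite_eq' Finset.univ j u,
          if_pos (Finset.mem_univ j)]
      rw [hrw]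
      refine Finset.prod_le_prod (fun i _ => by positivity) (fun i _ => ?_)
      by_cases h : i = j
      · subst h
        rw [if_pos rfl, ← sq]
        exact pow_le_pow_right₀ (hu1 i) hj
      · rw [if_neg h, mul_one]
        exact le_self_pow₀ (hu1 i) (by have := hpos i; omega)
    rcases max_choice (u 0) (u (Fin.last d)) with h | h <;> rw [hM, h]
    · exact key 0 hfirst
    · exact key (Fin.last d) hlast
  exact le_trans step1 step2

theorem multitangent_summable (d : ℕ) (k : Fin (d + 1) → ℕ)
    (hpos : ∀ i, 1 ≤ k i) (hfirst : 2 ≤ k 0) (hlast : 2 ≤ k (Fin.last d))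
    (z : ℂ) (hz : ∀ m : ℤ, z ≠ m) :
    Summable (fun m : {m : Fin (d + 1) → ℤ // StrictMono m} =>
      ‖∏ i, ((z + (m.1 i : ℂ)) ^ k i)⁻¹‖) := by
  obtain ⟨δ, hδ, hδle⟩ := aux_delta z hz
  set q : ℝ := 1 + 1 / ((d : ℝ) + 1) with hq
  have hq1 : 1 < q := by
    have h : (0 : ℝ) < 1 / ((d : ℝ) + 1) := by positivity
    rw [hq]; linarith
  set C : ℝ := ∏ i : Fin (d + 1), (δ ^ (k i))⁻¹ with hC
  have hC0 : 0 < C := Finset.prod_pos fun i _ => by positivity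
  have hsum : Summable (fun m : Fin (d + 1) → ℤ =>
      C * ∏ i, ((1 : ℝ) + |(m i : ℝ)|) ^ (-q)) :=
    (aux_summable_pi (d + 1) q hq1).mul_left C
  have hsub : Summable (fun m : {m : Fin (d + 1) → ℤ // StrictMono m} =>
      C * ∏ i, ((1 : ℝ) + |(m.1 i : ℝ)|) ^ (-q)) :=
    hsum.comp_injective Subtype.val_injective
  refine Summable.of_nonneg_of_le (fun m => norm_nonneg _) (fun m => ?_) hsub
  obtain ⟨m, hm⟩ := m
  set u : Fin (d + 1) → ℝ := fun i => 1 + |(m i : ℝ)| with hu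
  have hu0 : ∀ i, (0 : ℝ) < u i := fun i => by
    simp only [hu]; positivity
  -- norm of the product
  have hnorm : ‖∏ i, ((z + (m i : ℂ)) ^ k i)⁻¹‖ =
      ∏ i, ((‖z + (m i : ℂ)‖) ^ (k i))⁻¹ := by
    rw [norm_prod]
    exact Finset.prod_congr rfl fun i _ => by
      rw [norm_inv, norm_pow]
  rw [hnorm]
  -- first comparison : to (δ * u i) ^ k i
  have step1 : ∏ i, ((‖z + (m i : ℂ)‖) ^ (k i))⁻¹ ≤
      C * ∏ i, (u i ^ (k i))⁻¹ := by
    rw [hC, ← Finset.prod_mul_distrib]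
    refine Finset.prod_le_prod (fun i _ => by positivity) (fun i _ => ?_)
    rw [← mul_inv, ← mul_pow]
    apply inv_anti₀ (by positivity)
    exact pow_le_pow_left₀ (by positivity) (hδle (m i)) _
  refine le_trans step1 ?_
  -- second comparison : exponent redistribution
  apply mul_le_mul_of_nonneg_left _ hC0.le
  have hred := aux_redistribute d k hpos hfirst hlast m hm
  have hprodpos : (0 : ℝ) < ∏ i, u i ^ ((1 : ℝ) + 1 / ((d : ℝ) + 1)) :=
    Finset.prod_pos fun i _ => Real.rpow_pos_of_pos (hu0 i) _
  calc ∏ i, (u i ^ (k i))⁻¹ = (∏ i, u i ^ (k i))⁻¹ := by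
        rw [← Finset.prod_inv_distrib]
    _ ≤ (∏ i, u i ^ ((1 : ℝ) + 1 / ((d : ℝ) + 1)))⁻¹ :=
        inv_anti₀ hprodpos hred
    _ = ∏ i, u i ^ (-q) := by
        rw [← Finset.prod_inv_distrib]
        exact Finset.prod_congr rfl fun i _ => by
          rw [hq, ← Real.rpow_neg (hu0 i).le]
end

section
/- For positive integers k_1, ..., k_r with k_1, k_r ≥ 2, the multitangent function Ψ_{k_1,...,k_r} is holomorphic on ℂ \ ℤ. -/
set_option maxHeartbeats 1000000

/-- The multitangent function `Ψ_{k_1,...,k_d}(z)`. -/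
noncomputable def Multitangent {d : ℕ} (k : Fin d → ℕ) (z : ℂ) : ℂ :=
  ∑' m : {m : Fin d → ℤ // StrictMono m}, ∏ i, ((z + (m.1 i : ℂ)) ^ k i)⁻¹


open Finset

namespace MultitangentAux

noncomputable def hh (n : ℤ) : ℝ := (1 + |(n : ℝ)|)⁻¹

lemma one_le_base (n : ℤ) : (1:ℝ) ≤ 1 + |(n:ℝ)| := by
  have := abs_nonneg (n:ℝ); linarith

lemma base_pos (n : ℤ) : (0:ℝ) < 1 + |(n:ℝ)| := lt_of_lt_of_le one_pos (one_le_base n)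

lemma hh_pos (n : ℤ) : 0 < hh n := inv_pos.2 (base_pos n)

lemma hh_nonneg (n : ℤ) : 0 ≤ hh n := (hh_pos n).le

lemma hh_le_one (n : ℤ) : hh n ≤ 1 := by
  rw [hh, inv_le_one_iff₀]; right; exact one_le_base n

lemma summable_rpow {c : ℝ} (hc : 1 < c) :
    Summable fun n : ℤ => ((1 + |(n:ℝ)|) ^ c)⁻¹ := by
  have hnat : Summable fun n : ℕ => (((1:ℝ) + (n:ℝ)) ^ c)⁻¹ := by
    have h0 : Summable (fun n : ℕ => (((n:ℝ)) ^ c)⁻¹) := Real.summable_nat_rpow_inv.2 hc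
    have h1 := (summable_nat_add_iff (f := fun n : ℕ => (((n:ℝ)) ^ c)⁻¹) 1).2 h0
    refine h1.congr fun n => ?_
    push_cast
    ring_nf
  apply Summable.of_nat_of_neg
  · refine hnat.congr fun n => ?_
    norm_num
  · refine hnat.congr fun n => ?_
    push_cast
    rw [abs_neg, abs_of_nonneg (by positivity : (0:ℝ) ≤ (n:ℝ))]


/-- sum over a finset of tuples with entries in `w`, injectively indexed,
is at most the power of the sum over `w`. -/
lemma mid_bound {ι A : Type*} [Fintype ι] [DecidableEq ι]
    (w : Finset ℤ) (v : Finset A) (φ : A → ι → ℤ)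
    (hinj : ∀ x ∈ v, ∀ y ∈ v, φ x = φ y → x = y)
    (hmem : ∀ x ∈ v, ∀ i, φ x i ∈ w) :
    ∑ x ∈ v, ∏ i, hh (φ x i) ≤ (∑ n ∈ w, hh n) ^ (Fintype.card ι) := by
  classical
  calc ∑ x ∈ v, ∏ i, hh (φ x i)
      = ∑ y ∈ v.image φ, ∏ i, hh (y i) :=
        (sum_image (f := fun y : ι → ℤ => ∏ i, hh (y i)) (g := φ) hinj).symm
    _ ≤ ∑ y ∈ Fintype.piFinset (fun _ : ι => w), ∏ i, hh (y i) := by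
        refine sum_le_sum_of_subset_of_nonneg ?_
          (fun y _ _ => prod_nonneg fun i _ => hh_nonneg _)
        rw [image_subset_iff]
        intro x hx
        exact Fintype.mem_piFinset.2 (hmem x hx)
    _ = ∏ _i : ι, ∑ n ∈ w, hh n := (Finset.prod_univ_sum _ _).symm
    _ = (∑ n ∈ w, hh n) ^ (Fintype.card ι) := by
        rw [prod_const, card_univ]

/-- Hölder bound for the interval sum. -/
lemma Ioo_sum_le {p' q' : ℝ} (hpq : p'.HolderConjugate q')
    (hZs : Summable fun n : ℤ => hh n ^ p') {a b : ℤ} (hab : a < b) :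
    ∑ n ∈ Finset.Ioo a b, hh n
      ≤ (∑' n : ℤ, hh n ^ p') ^ ((1:ℝ)/p') * ((b:ℝ) - (a:ℝ)) ^ ((1:ℝ)/q') := by
  classical
  have hZ0 : 0 ≤ ∑' n : ℤ, hh n ^ p' := tsum_nonneg fun n => Real.rpow_nonneg (hh_nonneg n) _
  have hhold := Real.inner_le_Lp_mul_Lq_of_nonneg (s := Finset.Ioo a b)
    (f := hh) (g := fun _ => (1:ℝ)) hpq (fun i _ => hh_nonneg i) (fun i _ => zero_le_one)
  simp only [mul_one, Real.one_rpow, sum_const, nsmul_eq_mul] at hhold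
  refine hhold.trans (mul_le_mul ?_ ?_ ?_ ?_)
  · exact Real.rpow_le_rpow (sum_nonneg fun i _ => Real.rpow_nonneg (hh_nonneg i) _)
      (Summable.sum_le_tsum _ (fun i _ => Real.rpow_nonneg (hh_nonneg i) _) hZs)
      (one_div_nonneg.2 hpq.pos.le)
  · refine Real.rpow_le_rpow (by positivity) ?_ (one_div_nonneg.2 hpq.symm.pos.le)
    have h1 : ((Finset.Ioo a b).card : ℤ) ≤ b - a := by
      rw [Int.card_Ioo]; omega
    have h2 : ((((Finset.Ioo a b).card : ℤ)) : ℝ) ≤ ((b - a : ℤ) : ℝ) := by exact_mod_cast h1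
    push_cast at h2 ⊢
    linarith
  · positivity
  · exact Real.rpow_nonneg hZ0 _

/-- splitting the gap power between the two ends -/
lemma gap_split {a b : ℤ} (hab : a < b) :
    ((b:ℝ) - (a:ℝ)) ^ ((1:ℝ)/2)
      ≤ (1+|(a:ℝ)|) ^ ((1:ℝ)/2) * (1+|(b:ℝ)|) ^ ((1:ℝ)/2) := by
  have hba0 : (0:ℝ) ≤ (b:ℝ) - (a:ℝ) := by
    have : ((a:ℝ)) ≤ ((b:ℝ)) := by exact_mod_cast hab.le
    linarith
  rw [← Real.mul_rpow (base_pos a).le (base_pos b).le]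
  refine Real.rpow_le_rpow hba0 ?_ (by norm_num)
  have h1 := abs_nonneg ((a:ℝ)); have h2 := abs_nonneg ((b:ℝ))
  have h3 := le_abs_self ((b:ℝ)); have h4 := neg_abs_le ((a:ℝ))
  nlinarith

noncomputable def gg (n : ℤ) : ℝ := ((1 + |(n:ℝ)|) ^ ((3:ℝ)/2))⁻¹

lemma gg_nonneg (n : ℤ) : 0 ≤ gg n := inv_nonneg.2 (Real.rpow_nonneg (base_pos n).le _)

lemma summable_gg : Summable gg := summable_rpow (by norm_num)

lemma hh_sq_mul (n : ℤ) : hh n ^ 2 * (1 + |(n:ℝ)|) ^ ((1:ℝ)/2) = gg n := by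
  have hx := base_pos n
  have hmul : (1 + |(n:ℝ)|) ^ ((3:ℝ)/2) * (1 + |(n:ℝ)|) ^ ((1:ℝ)/2) = (1+|(n:ℝ)|)^2 := by
    rw [← Real.rpow_add hx, ← Real.rpow_two]
    norm_num
  have h32 : (0:ℝ) < (1 + |(n:ℝ)|) ^ ((3:ℝ)/2) := Real.rpow_pos_of_pos hx _
  have h12 : (0:ℝ) < (1 + |(n:ℝ)|) ^ ((1:ℝ)/2) := Real.rpow_pos_of_pos hx _
  rw [hh, inv_pow, gg]
  field_simp
  linear_combination hmul

lemma pow_gap {r : ℕ} (hr : 1 ≤ r) {I Zp X : ℝ} (hI0 : 0 ≤ I) (hZp : 0 ≤ Zp) (hX : 1 ≤ X)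
    (hIle : I ≤ Zp * X ^ ((1:ℝ)/(2*(r:ℝ)))) :
    I ^ (r-1) ≤ Zp ^ (r-1) * X ^ ((1:ℝ)/2) := by
  have hX0 : (0:ℝ) ≤ X := le_trans zero_le_one hX
  have hrR : (1:ℝ) ≤ (r:ℝ) := by exact_mod_cast hr
  calc I ^ (r-1) ≤ (Zp * X ^ ((1:ℝ)/(2*(r:ℝ)))) ^ (r-1) := pow_le_pow_left₀ hI0 hIle _
    _ = Zp ^ (r-1) * (X ^ ((1:ℝ)/(2*(r:ℝ)))) ^ (r-1) := mul_pow _ _ _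
    _ ≤ Zp ^ (r-1) * X ^ ((1:ℝ)/2) := by
        refine mul_le_mul_of_nonneg_left ?_ (pow_nonneg hZp _)
        rw [← Real.rpow_natCast (X ^ ((1:ℝ)/(2*(r:ℝ)))) (r-1), ← Real.rpow_mul hX0]
        refine Real.rpow_le_rpow_of_exponent_le hX ?_
        rw [Nat.cast_sub hr]
        rw [div_mul_eq_mul_div, one_mul, div_le_div_iff₀ (by linarith) two_pos]
        push_cast
        nlinarith

lemma conj_exp {r : ℕ} (hr : 1 ≤ r) :
    Real.HolderConjugate ((2*(r:ℝ))/(2*(r:ℝ)-1)) (2*(r:ℝ)) := by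
  have hrR : (1:ℝ) ≤ (r:ℝ) := by exact_mod_cast hr
  have h2r1 : (0:ℝ) < 2*(r:ℝ) - 1 := by linarith
  rw [Real.holderConjugate_iff]
  constructor
  · rw [lt_div_iff₀ h2r1]; linarith
  · field_simp
    ring

lemma summable_hh_pow {r : ℕ} (hr : 1 ≤ r) :
    Summable fun n : ℤ => hh n ^ ((2*(r:ℝ))/(2*(r:ℝ)-1)) := by
  refine (summable_rpow (conj_exp hr).lt).congr fun n => ?_
  rw [hh, ← Real.inv_rpow (base_pos n).le]

lemma fiber_bound (r : ℕ) (hr : 1 ≤ r) (u : Finset {m : Fin (r+1) → ℤ // StrictMono m})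
    {a b : ℤ} (hab : a < b) :
    ∑ m ∈ u.filter (fun m => (m.1 0, m.1 (Fin.last r)) = (a, b)),
        (hh (m.1 0) ^ 2 * hh (m.1 (Fin.last r)) ^ 2 *
          ∏ i ∈ (Finset.univ.erase 0).erase (Fin.last r), hh (m.1 i))
      ≤ ((∑' n : ℤ, hh n ^ ((2*(r:ℝ))/(2*(r:ℝ)-1))) ^ ((1:ℝ)/((2*(r:ℝ))/(2*(r:ℝ)-1)))) ^ (r-1)
          * (gg a * gg b) := by
  classical
  have hlastne : (Fin.last r) ≠ (0 : Fin (r+1)) := by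
    simp only [Ne, Fin.ext_iff, Fin.val_last, Fin.val_zero]
    omega
  have hlast_pos : (0 : Fin (r+1)) < Fin.last r := by
    rw [Fin.lt_iff_val_lt_val]
    simp only [Fin.val_zero, Fin.val_last]
    omega
  have hDcard : ((Finset.univ.erase (0 : Fin (r+1))).erase (Fin.last r)).card = r - 1 := by
    rw [card_erase_of_mem, card_erase_of_mem (mem_univ _), card_univ, Fintype.card_fin]
    · omega
    · exact mem_erase.2 ⟨hlastne, mem_univ _⟩
  have hpq := conj_exp hr
  have hZs := summable_hh_pow hr
  have hZ0 : 0 ≤ ∑' n : ℤ, hh n ^ ((2*(r:ℝ))/(2*(r:ℝ)-1)) :=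
    tsum_nonneg fun n => Real.rpow_nonneg (hh_nonneg n) _
  have hZp0 : 0 ≤ (∑' n : ℤ, hh n ^ ((2*(r:ℝ))/(2*(r:ℝ)-1))) ^ ((1:ℝ)/((2*(r:ℝ))/(2*(r:ℝ)-1))) :=
    Real.rpow_nonneg hZ0 _
  have hba1 : (1:ℝ) ≤ (b:ℝ) - (a:ℝ) := by
    have h' : a + 1 ≤ b := hab
    have h'' : ((a + 1 : ℤ) : ℝ) ≤ ((b : ℤ) : ℝ) := by exact_mod_cast h'
    push_cast at h''
    linarith
  have hI0 : 0 ≤ ∑ n ∈ Finset.Ioo a b, hh n := sum_nonneg fun n _ => hh_nonneg n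
  -- middle bound
  have hmid : (∑ m ∈ u.filter (fun m => (m.1 0, m.1 (Fin.last r)) = (a, b)),
      ∏ i ∈ (Finset.univ.erase 0).erase (Fin.last r), hh (m.1 i))
      ≤ (∑ n ∈ Finset.Ioo a b, hh n) ^ (r-1) := by
    have hb := mid_bound (ι := {x // x ∈ (Finset.univ.erase (0:Fin (r+1))).erase (Fin.last r)})
      (Finset.Ioo a b) (u.filter (fun m => (m.1 0, m.1 (Fin.last r)) = (a, b)))
      (fun m i => m.1 i.1) ?_ ?_
    · rw [Fintype.card_coe, hDcard] at hb
      refine le_trans (le_of_eq ?_) hb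
      refine sum_congr rfl fun m _ => ?_
      exact Finset.prod_subtype _ (fun x => Iff.rfl) (fun i => hh (m.1 i))
    · intro m hm m' hm' hmm
      obtain ⟨-, hEm⟩ := mem_filter.1 hm
      obtain ⟨-, hEm'⟩ := mem_filter.1 hm'
      apply Subtype.ext; funext i
      by_cases h0 : i = 0
      · subst h0
        rw [show m.1 0 = a from congrArg Prod.fst hEm,
          show m'.1 0 = a from congrArg Prod.fst hEm']
      by_cases hl : i = Fin.last r
      · subst hl
        rw [show m.1 (Fin.last r) = b from congrArg Prod.snd hEm,
          show m'.1 (Fin.last r) = b from congrArg Prod.snd hEm']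
      · have hiD : i ∈ (Finset.univ.erase (0:Fin (r+1))).erase (Fin.last r) :=
          mem_erase.2 ⟨hl, mem_erase.2 ⟨h0, mem_univ _⟩⟩
        exact congrFun hmm ⟨i, hiD⟩
    · intro m hm i
      obtain ⟨-, hEm⟩ := mem_filter.1 hm
      have h2 := mem_erase.1 i.2
      have h3 := mem_erase.1 h2.2
      rw [Finset.mem_Ioo]
      constructor
      · rw [← show m.1 0 = a from congrArg Prod.fst hEm]
        exact m.2 (lt_of_le_of_ne (Fin.zero_le _) (Ne.symm h3.1))
      · rw [← show m.1 (Fin.last r) = b from congrArg Prod.snd hEm]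
        exact m.2 (lt_of_le_of_ne (Fin.le_last _) h2.1)
  have hIle' : (∑ n ∈ Finset.Ioo a b, hh n)
      ≤ ((∑' n : ℤ, hh n ^ ((2*(r:ℝ))/(2*(r:ℝ)-1))) ^ ((1:ℝ)/((2*(r:ℝ))/(2*(r:ℝ)-1))))
        * ((b:ℝ) - (a:ℝ)) ^ ((1:ℝ)/(2*(r:ℝ))) := by
    have h0 := Ioo_sum_le hpq hZs hab
    convert h0 using 3
  have hIpow := pow_gap hr hI0 hZp0 hba1 hIle'
  have hsplit := gap_split hab
  have hfibsum : (∑ m ∈ u.filter (fun m => (m.1 0, m.1 (Fin.last r)) = (a, b)),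
      (hh (m.1 0) ^ 2 * hh (m.1 (Fin.last r)) ^ 2 *
        ∏ i ∈ (Finset.univ.erase 0).erase (Fin.last r), hh (m.1 i)))
      = hh a ^ 2 * hh b ^ 2 * ∑ m ∈ u.filter (fun m => (m.1 0, m.1 (Fin.last r)) = (a, b)),
          ∏ i ∈ (Finset.univ.erase 0).erase (Fin.last r), hh (m.1 i) := by
    rw [mul_sum]
    refine sum_congr rfl fun m hm => ?_
    obtain ⟨-, hEm⟩ := mem_filter.1 hm
    rw [show m.1 0 = a from congrArg Prod.fst hEm,
      show m.1 (Fin.last r) = b from congrArg Prod.snd hEm]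
  have hhnn : (0:ℝ) ≤ hh a ^ 2 * hh b ^ 2 :=
    mul_nonneg (pow_nonneg (hh_nonneg _) _) (pow_nonneg (hh_nonneg _) _)
  rw [hfibsum]
  calc hh a ^ 2 * hh b ^ 2 * ∑ m ∈ u.filter (fun m => (m.1 0, m.1 (Fin.last r)) = (a, b)),
          ∏ i ∈ (Finset.univ.erase 0).erase (Fin.last r), hh (m.1 i)
      ≤ hh a ^ 2 * hh b ^ 2 * (∑ n ∈ Finset.Ioo a b, hh n) ^ (r-1) :=
        mul_le_mul_of_nonneg_left hmid hhnn
    _ ≤ hh a ^ 2 * hh b ^ 2 *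
          (((∑' n : ℤ, hh n ^ ((2*(r:ℝ))/(2*(r:ℝ)-1))) ^ ((1:ℝ)/((2*(r:ℝ))/(2*(r:ℝ)-1)))) ^ (r-1)
            * ((b:ℝ) - (a:ℝ)) ^ ((1:ℝ)/2)) :=
        mul_le_mul_of_nonneg_left hIpow hhnn
    _ ≤ hh a ^ 2 * hh b ^ 2 *
          (((∑' n : ℤ, hh n ^ ((2*(r:ℝ))/(2*(r:ℝ)-1))) ^ ((1:ℝ)/((2*(r:ℝ))/(2*(r:ℝ)-1)))) ^ (r-1)
            * ((1+|(a:ℝ)|) ^ ((1:ℝ)/2) * (1+|(b:ℝ)|) ^ ((1:ℝ)/2))) := by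
        refine mul_le_mul_of_nonneg_left
          (mul_le_mul_of_nonneg_left hsplit (pow_nonneg hZp0 _)) hhnn
    _ = ((∑' n : ℤ, hh n ^ ((2*(r:ℝ))/(2*(r:ℝ)-1))) ^ ((1:ℝ)/((2*(r:ℝ))/(2*(r:ℝ)-1)))) ^ (r-1)
          * ((hh a ^ 2 * (1+|(a:ℝ)|) ^ ((1:ℝ)/2)) * (hh b ^ 2 * (1+|(b:ℝ)|) ^ ((1:ℝ)/2))) := by
        ring
    _ = ((∑' n : ℤ, hh n ^ ((2*(r:ℝ))/(2*(r:ℝ)-1))) ^ ((1:ℝ)/((2*(r:ℝ))/(2*(r:ℝ)-1)))) ^ (r-1)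
          * (gg a * gg b) := by
        rw [hh_sq_mul a, hh_sq_mul b]

theorem summable_core (r : ℕ) (hr : 1 ≤ r) :
    Summable (fun m : {m : Fin (r+1) → ℤ // StrictMono m} =>
      hh (m.1 0) ^ 2 * hh (m.1 (Fin.last r)) ^ 2 *
        ∏ i ∈ (Finset.univ.erase 0).erase (Fin.last r), hh (m.1 i)) := by
  classical
  have hlast_pos : (0 : Fin (r+1)) < Fin.last r := by
    rw [Fin.lt_iff_val_lt_val]
    simp only [Fin.val_zero, Fin.val_last]
    omega
  set C0 : ℝ := ((∑' n : ℤ, hh n ^ ((2*(r:ℝ))/(2*(r:ℝ)-1)))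
      ^ ((1:ℝ)/((2*(r:ℝ))/(2*(r:ℝ)-1)))) ^ (r-1) with hC0
  have hC00 : 0 ≤ C0 :=
    pow_nonneg (Real.rpow_nonneg (tsum_nonneg fun n =>
      Real.rpow_nonneg (hh_nonneg n) _) _) _
  set B : ℝ := ∑' n : ℤ, gg n with hB
  have hB0 : 0 ≤ B := tsum_nonneg gg_nonneg
  apply summable_of_sum_le (c := C0 * B * B)
  · intro m
    exact mul_nonneg (mul_nonneg (pow_nonneg (hh_nonneg _) _) (pow_nonneg (hh_nonneg _) _))
      (prod_nonneg fun i _ => hh_nonneg _)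
  intro u
  have hfib : ∀ ab ∈ u.image (fun m : {m : Fin (r+1) → ℤ // StrictMono m} =>
        (m.1 0, m.1 (Fin.last r))),
      (∑ m ∈ u.filter (fun m => (m.1 0, m.1 (Fin.last r)) = ab),
        (hh (m.1 0) ^ 2 * hh (m.1 (Fin.last r)) ^ 2 *
          ∏ i ∈ (Finset.univ.erase 0).erase (Fin.last r), hh (m.1 i)))
      ≤ C0 * (gg ab.1 * gg ab.2) := by
    intro ab hab
    obtain ⟨m₀, hm₀u, hEm₀⟩ := mem_image.1 hab
    have habint : ab.1 < ab.2 := by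
      rw [← show m₀.1 0 = ab.1 from congrArg Prod.fst hEm₀,
        ← show m₀.1 (Fin.last r) = ab.2 from congrArg Prod.snd hEm₀]
      exact m₀.2 hlast_pos
    have hfb := fiber_bound r hr u habint
    rw [← hC0] at hfb
    simpa only [Prod.mk.eta] using hfb
  calc (∑ m ∈ u, (hh (m.1 0) ^ 2 * hh (m.1 (Fin.last r)) ^ 2 *
          ∏ i ∈ (Finset.univ.erase 0).erase (Fin.last r), hh (m.1 i)))
      = ∑ ab ∈ u.image (fun m => (m.1 0, m.1 (Fin.last r))),
          ∑ m ∈ u.filter (fun m => (m.1 0, m.1 (Fin.last r)) = ab),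
          (hh (m.1 0) ^ 2 * hh (m.1 (Fin.last r)) ^ 2 *
            ∏ i ∈ (Finset.univ.erase 0).erase (Fin.last r), hh (m.1 i)) :=
        (sum_fiberwise_of_maps_to (fun m hm => mem_image_of_mem _ hm) _).symm
    _ ≤ ∑ ab ∈ u.image (fun m => (m.1 0, m.1 (Fin.last r))), C0 * (gg ab.1 * gg ab.2) :=
        sum_le_sum hfib
    _ = C0 * ∑ ab ∈ u.image (fun m => (m.1 0, m.1 (Fin.last r))), gg ab.1 * gg ab.2 := by
        rw [mul_sum]
    _ ≤ C0 * (B * B) := by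
        refine mul_le_mul_of_nonneg_left ?_ hC00
        set P := u.image (fun m : {m : Fin (r+1) → ℤ // StrictMono m} =>
          (m.1 0, m.1 (Fin.last r))) with hP
        calc (∑ ab ∈ P, gg ab.1 * gg ab.2)
            ≤ ∑ ab ∈ (P.image Prod.fst) ×ˢ (P.image Prod.snd), gg ab.1 * gg ab.2 := by
              refine sum_le_sum_of_subset_of_nonneg ?_
                (fun ab _ _ => mul_nonneg (gg_nonneg _) (gg_nonneg _))
              intro ab hab
              exact mem_product.2 ⟨mem_image_of_mem _ hab, mem_image_of_mem _ hab⟩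
          _ = (∑ x ∈ P.image Prod.fst, gg x) * (∑ y ∈ P.image Prod.snd, gg y) := by
              rw [sum_product, ← Finset.sum_mul_sum]
          _ ≤ B * B :=
              mul_le_mul (Summable.sum_le_tsum _ (fun _ _ => gg_nonneg _) summable_gg)
                (Summable.sum_le_tsum _ (fun _ _ => gg_nonneg _) summable_gg)
                (sum_nonneg fun _ _ => gg_nonneg _) hB0
    _ = C0 * B * B := (mul_assoc _ _ _).symm

lemma summable_core0 :
    Summable (fun m : {m : Fin 1 → ℤ // StrictMono m} => hh (m.1 0) ^ 2) := by
  have h2 : Summable fun n : ℤ => hh n ^ 2 := by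
    refine (summable_rpow (c := 2) one_lt_two).congr fun n => ?_
    rw [hh, ← Real.inv_rpow (base_pos n).le, Real.rpow_two]
  have hfull : Summable fun m : Fin 1 → ℤ => hh (m 0) ^ 2 := by
    have := (Equiv.funUnique (Fin 1) ℤ).summable_iff (f := fun n : ℤ => hh n ^ 2)
    exact this.2 h2
  exact hfull.subtype _

end MultitangentAux

open MultitangentAux in
theorem multitangent_differentiableOn' (r : ℕ) (k : Fin (r + 1) → ℕ)
    (hpos : ∀ i, 1 ≤ k i) (hfirst : 2 ≤ k 0) (hlast : 2 ≤ k (Fin.last r)) :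
    DifferentiableOn ℂ (fun z => ∑' m : {m : Fin (r+1) → ℤ // StrictMono m},
      ∏ i, ((z + ((m.1 i : ℤ) : ℂ)) ^ k i)⁻¹) {z : ℂ | ∀ m : ℤ, z ≠ m} := by
  classical
  intro z₀ hz₀
  have hz₀' : ∀ m : ℤ, z₀ ≠ (m:ℂ) := hz₀
  set n₀ : ℤ := round z₀.re with hn₀
  have hne : z₀ - (n₀:ℂ) ≠ 0 := sub_ne_zero.2 (hz₀' n₀)
  set δ₁ : ℝ := min ‖z₀ - (n₀:ℂ)‖ (1/2) with hδ₁
  have hδ₁pos : 0 < δ₁ := lt_min (norm_pos_iff.2 hne) (by norm_num)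
  have hδ₁le : δ₁ ≤ 1/2 := min_le_right _ _
  have hlow : ∀ m : ℤ, δ₁ ≤ ‖z₀ + (m:ℂ)‖ := by
    intro m
    rcases eq_or_ne m (-n₀) with h | h
    · subst h
      have he : z₀ + ((-n₀ : ℤ):ℂ) = z₀ - (n₀:ℂ) := by push_cast; ring
      rw [he]
      exact min_le_left _ _
    · refine le_trans hδ₁le ?_
      have h1 : (1:ℝ) ≤ |((m + n₀ : ℤ):ℝ)| := by
        rw [← Int.cast_abs]
        exact_mod_cast Int.one_le_abs (by omega)
      have h2 : |z₀.re - (n₀:ℝ)| ≤ 1/2 := by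
        rw [hn₀]
        exact abs_sub_round z₀.re
      have hcast : ((m + n₀ : ℤ):ℝ) = (z₀.re + (m:ℝ)) - (z₀.re - (n₀:ℝ)) := by
        push_cast; ring
      have h4 : |((m + n₀ : ℤ):ℝ)| ≤ |z₀.re + (m:ℝ)| + |z₀.re - (n₀:ℝ)| := by
        rw [hcast, sub_eq_add_neg]
        exact le_trans (abs_add_le _ _) (by rw [abs_neg])
      have h5 : (1:ℝ)/2 ≤ |z₀.re + (m:ℝ)| := by linarith
      have h6 : |z₀.re + (m:ℝ)| ≤ ‖z₀ + (m:ℂ)‖ := by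
        have h7 : (z₀ + (m:ℂ)).re = z₀.re + (m:ℝ) := by
          simp [Complex.add_re]
        rw [← h7]
        exact Complex.abs_re_le_norm _
      linarith
  set ρ : ℝ := δ₁/2 with hρ
  have hρpos : 0 < ρ := by rw [hρ]; linarith
  have hρ14 : ρ ≤ 1/4 := by rw [hρ]; linarith
  have hball : ∀ z ∈ Metric.ball z₀ ρ, ∀ m : ℤ, ρ ≤ ‖z + (m:ℂ)‖ := by
    intro z hz m
    have hd : ‖z - z₀‖ < ρ := by
      rw [← dist_eq_norm]
      exact Metric.mem_ball.1 hz
    have h1 := hlow m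
    have h2 : ‖z₀ + (m:ℂ)‖ - ‖z + (m:ℂ)‖ ≤ ‖z₀ - z‖ := by
      have h3 := norm_sub_norm_le (z₀ + (m:ℂ)) (z + (m:ℂ))
      have h4 : (z₀ + (m:ℂ)) - (z + (m:ℂ)) = z₀ - z := by ring
      rwa [h4] at h3
    have h5 : ‖z₀ - z‖ = ‖z - z₀‖ := norm_sub_rev _ _
    rw [hρ] at *
    linarith
  set N : ℕ := ⌈‖z₀‖ + ρ⌉₊ with hN
  have hNz : ∀ z ∈ Metric.ball z₀ ρ, ‖z‖ ≤ (N:ℝ) := by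
    intro z hz
    have hd : ‖z - z₀‖ < ρ := by
      rw [← dist_eq_norm]; exact Metric.mem_ball.1 hz
    have h1 := norm_sub_norm_le z z₀
    have h2 : ‖z₀‖ + ρ ≤ (N:ℝ) := Nat.le_ceil _
    linarith
  set Q : ℝ := (4*(N:ℝ)+4)/ρ with hQ
  have hQ0 : 0 ≤ Q := by positivity
  have hQbound : ∀ z ∈ Metric.ball z₀ ρ, ∀ n : ℤ, ‖z + (n:ℂ)‖⁻¹ ≤ Q * hh n := by
    intro z hz n
    have hzn := hball z hz n
    have hlb : ρ * (1+|(n:ℝ)|) / (4*(N:ℝ)+4) ≤ ‖z + (n:ℂ)‖ := by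
      rcases le_or_gt |(n:ℝ)| (2*(N:ℝ)+1) with hcase | hcase
      · calc ρ * (1+|(n:ℝ)|)/(4*(N:ℝ)+4) ≤ ρ := by
              rw [div_le_iff₀ (by positivity)]
              nlinarith [abs_nonneg ((n:ℝ))]
          _ ≤ ‖z + (n:ℂ)‖ := hzn
      · have htri : ‖(n:ℂ)‖ ≤ ‖z + (n:ℂ)‖ + ‖z‖ := by
          have h4 : (n:ℂ) = (z + (n:ℂ)) - z := by ring
          calc ‖(n:ℂ)‖ = ‖(z + (n:ℂ)) - z‖ := by rw [← h4]
            _ ≤ ‖z + (n:ℂ)‖ + ‖z‖ := norm_sub_le _ _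
        have hnormn : ‖(n:ℂ)‖ = |(n:ℝ)| := by
          rw [Complex.norm_intCast]
        have hzN := hNz z hz
        rw [div_le_iff₀ (by positivity)]
        nlinarith [hzn, hρpos]
    have h0 : (0:ℝ) < ρ*(1+|(n:ℝ)|)/(4*(N:ℝ)+4) := by
      have := base_pos n
      positivity
    calc ‖z + (n:ℂ)‖⁻¹ ≤ (ρ * (1+|(n:ℝ)|) / (4*(N:ℝ)+4))⁻¹ := by
          exact inv_anti₀ h0 hlb
      _ = Q * hh n := by
          rw [hQ, hh]
          field_simp
  -- the majorant on tuples
  obtain ⟨w, hw_sum, hw_le⟩ : ∃ w : {m : Fin (r+1) → ℤ // StrictMono m} → ℝ,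
      Summable w ∧ ∀ m, (∏ i, hh (m.1 i) ^ k i) ≤ w m := by
    rcases Nat.eq_zero_or_pos r with rfl | hr
    · refine ⟨fun m => hh (m.1 0) ^ 2, summable_core0, fun m => ?_⟩
      rw [Fin.prod_univ_one]
      exact pow_le_pow_of_le_one (hh_nonneg _) (hh_le_one _) hfirst
    · refine ⟨fun m => hh (m.1 0) ^ 2 * hh (m.1 (Fin.last r)) ^ 2 *
        ∏ i ∈ (Finset.univ.erase 0).erase (Fin.last r), hh (m.1 i),
        summable_core r hr, fun m => ?_⟩
      have hlastne : (Fin.last r) ≠ (0 : Fin (r+1)) := by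
        simp only [Ne, Fin.ext_iff, Fin.val_last, Fin.val_zero]
        omega
      have e1 : (∏ i, hh (m.1 i) ^ k i)
          = hh (m.1 0) ^ k 0 * ∏ i ∈ Finset.univ.erase 0, hh (m.1 i) ^ k i :=
        (Finset.mul_prod_erase Finset.univ _ (Finset.mem_univ 0)).symm
      have e2 : (∏ i ∈ Finset.univ.erase 0, hh (m.1 i) ^ k i)
          = hh (m.1 (Fin.last r)) ^ k (Fin.last r) *
            ∏ i ∈ (Finset.univ.erase 0).erase (Fin.last r), hh (m.1 i) ^ k i :=
        (Finset.mul_prod_erase _ _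
          (Finset.mem_erase.2 ⟨hlastne, Finset.mem_univ _⟩)).symm
      rw [e1, e2]
      have b1 : hh (m.1 0) ^ k 0 ≤ hh (m.1 0) ^ 2 :=
        pow_le_pow_of_le_one (hh_nonneg _) (hh_le_one _) hfirst
      have b2 : hh (m.1 (Fin.last r)) ^ k (Fin.last r) ≤ hh (m.1 (Fin.last r)) ^ 2 :=
        pow_le_pow_of_le_one (hh_nonneg _) (hh_le_one _) hlast
      have b3 : (∏ i ∈ (Finset.univ.erase 0).erase (Fin.last r), hh (m.1 i) ^ k i)
          ≤ ∏ i ∈ (Finset.univ.erase 0).erase (Fin.last r), hh (m.1 i) := by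
        refine Finset.prod_le_prod (fun i _ => pow_nonneg (hh_nonneg _) _) fun i _ => ?_
        have := pow_le_pow_of_le_one (hh_nonneg (m.1 i)) (hh_le_one (m.1 i)) (hpos i)
        simpa using this
      calc hh (m.1 0) ^ k 0 * (hh (m.1 (Fin.last r)) ^ k (Fin.last r) *
              ∏ i ∈ (Finset.univ.erase 0).erase (Fin.last r), hh (m.1 i) ^ k i)
          ≤ hh (m.1 0) ^ 2 * (hh (m.1 (Fin.last r)) ^ 2 *
              ∏ i ∈ (Finset.univ.erase 0).erase (Fin.last r), hh (m.1 i)) := by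
            refine mul_le_mul b1 ?_ ?_ (pow_nonneg (hh_nonneg _) _)
            · refine mul_le_mul b2 b3 (Finset.prod_nonneg fun i _ => pow_nonneg (hh_nonneg _) _)
                (pow_nonneg (hh_nonneg _) _)
            · exact mul_nonneg (pow_nonneg (hh_nonneg _) _)
                (Finset.prod_nonneg fun i _ => pow_nonneg (hh_nonneg _) _)
        _ = hh (m.1 0) ^ 2 * hh (m.1 (Fin.last r)) ^ 2 *
              ∏ i ∈ (Finset.univ.erase 0).erase (Fin.last r), hh (m.1 i) := by ring
  set K : ℕ := ∑ i, k i with hK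
  have hw0 : ∀ m, 0 ≤ w m := fun m =>
    le_trans (Finset.prod_nonneg fun i _ => pow_nonneg (hh_nonneg _) _) (hw_le m)
  have husum : Summable (fun m : {m : Fin (r+1) → ℤ // StrictMono m} => Q ^ K * w m) :=
    hw_sum.mul_left _
  have hd := Complex.differentiableOn_tsum_of_summable_norm
    (F := fun (m : {m : Fin (r+1) → ℤ // StrictMono m}) (z : ℂ) =>
      ∏ i, ((z + ((m.1 i : ℤ) : ℂ)) ^ k i)⁻¹)
    (U := Metric.ball z₀ ρ) husum ?_ Metric.isOpen_ball ?_
  · exact ((hd.differentiableAt (Metric.isOpen_ball.mem_nhds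
      (Metric.mem_ball_self hρpos))).differentiableWithinAt)
  · intro m
    refine DifferentiableOn.fun_finsetProd fun i _ => ?_
    refine DifferentiableOn.inv ?_ ?_
    · exact ((differentiable_id.add_const _).pow _).differentiableOn
    · intro z hz
      have h := hball z hz (m.1 i)
      refine pow_ne_zero _ fun hzero => ?_
      rw [hzero, norm_zero] at h
      linarith
  · intro m z hz
    have hstep : ∀ i : Fin (r+1), ‖((z + ((m.1 i : ℤ) : ℂ)) ^ k i)⁻¹‖
        ≤ (Q * hh (m.1 i)) ^ k i := by
      intro i
      rw [norm_inv, norm_pow, ← inv_pow]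
      exact pow_le_pow_left₀ (inv_nonneg.2 (norm_nonneg _)) (hQbound z hz (m.1 i)) _
    calc ‖∏ i, ((z + ((m.1 i : ℤ) : ℂ)) ^ k i)⁻¹‖
        = ∏ i, ‖((z + ((m.1 i : ℤ) : ℂ)) ^ k i)⁻¹‖ := norm_prod _ _
      _ ≤ ∏ i, (Q * hh (m.1 i)) ^ k i :=
          Finset.prod_le_prod (fun i _ => norm_nonneg _) fun i _ => hstep i
      _ = (∏ i, Q ^ k i) * ∏ i, hh (m.1 i) ^ k i := by
          rw [← Finset.prod_mul_distrib]
          exact Finset.prod_congr rfl fun i _ => mul_pow _ _ _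
      _ = Q ^ K * ∏ i, hh (m.1 i) ^ k i := by
          rw [hK, Finset.prod_pow_eq_pow_sum]
      _ ≤ Q ^ K * w m :=
          mul_le_mul_of_nonneg_left (hw_le m) (pow_nonneg hQ0 _)

theorem multitangent_differentiableOn (r : ℕ) (k : Fin (r + 1) → ℕ)
    (hpos : ∀ i, 1 ≤ k i) (hfirst : 2 ≤ k 0) (hlast : 2 ≤ k (Fin.last r)) :
    DifferentiableOn ℂ (fun z => Multitangent k z) {z : ℂ | ∀ m : ℤ, z ≠ m} := by
  have h := multitangent_differentiableOn' r k hpos hfirst hlast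
  exact h
end

section
/- For z ∈ ℂ \ ℤ and integers a, b ≥ 2, the product Ψ_a(z)·Ψ_b(z) of monotangent functions equals Ψ_{a,b}(z) + Ψ_{b,a}(z) + Ψ_{a+b}(z). -/
/-- The monotangent function `Ψ_k(z)`. -/
noncomputable def Monotangent (k : ℕ) (z : ℂ) : ℂ := ∑' m : ℤ, ((z + (m : ℂ)) ^ k)⁻¹

lemma summable_norm_mono (k : ℕ) (hk : 2 ≤ k) (z : ℂ) :
    Summable fun m : ℤ => ‖((z + (m : ℂ)) ^ k)⁻¹‖ := by
  set C : ℝ := ‖z‖ + 1 with hC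
  have hC1 : 1 ≤ C := by have := norm_nonneg z; linarith
  have hg : Summable fun m : ℤ => 4 * (1 / (m : ℝ) ^ 2) :=
    (Real.summable_one_div_int_pow.mpr one_lt_two).mul_left 4
  apply Summable.of_norm_bounded_eventually hg
  have hfin : {m : ℤ | ¬ 2 * C ≤ |(m : ℝ)|}.Finite := by
    apply (Set.finite_Icc (-(⌈2 * C⌉)) ⌈2 * C⌉).subset
    intro m hm
    simp only [Set.mem_setOf_eq, not_le] at hm
    have h1 : |(m : ℝ)| ≤ (⌈2 * C⌉ : ℝ) := (hm.trans_le (Int.le_ceil _)).le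
    rw [← Int.cast_abs, Int.cast_le] at h1
    rw [abs_le] at h1
    rw [Set.mem_Icc]
    omega
  rw [Filter.eventually_cofinite]
  apply hfin.subset
  intro m hm
  simp only [Set.mem_setOf_eq, not_le] at hm ⊢
  by_contra h'
  push_neg at h'
  have hle : 2 * C ≤ |(m : ℝ)| := h'
  -- now hle : 2 * C ≤ |(m:ℝ)|, goal : ‖‖((z+m)^k)⁻¹‖‖ ≤ 4 * (1/(m:ℝ)^2)
  have habs : ‖(m : ℂ)‖ = |(m : ℝ)| := Complex.norm_intCast m
  have hlb : |(m : ℝ)| / 2 ≤ ‖z + (m : ℂ)‖ := by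
    have := norm_add_le (-(z : ℂ)) (z + m)
    have h2 : ‖(m : ℂ)‖ ≤ ‖z‖ + ‖z + (m : ℂ)‖ := by
      have h2' : ‖(m : ℂ)‖ ≤ ‖z + (m : ℂ)‖ + ‖z‖ := by
        calc ‖(m : ℂ)‖ = ‖(z + m) - z‖ := by ring_nf
          _ ≤ ‖z + (m : ℂ)‖ + ‖z‖ := norm_sub_le _ _
      linarith
    have h3 : ‖z‖ ≤ |(m : ℝ)| / 2 := by
      have : C ≤ |(m : ℝ)| / 2 := by linarith
      linarith [hC1]
    rw [habs] at h2
    linarith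
  have h1le : 1 ≤ ‖z + (m : ℂ)‖ := by
    have : 1 ≤ |(m : ℝ)| / 2 := by linarith
    linarith
  have hpow : (|(m : ℝ)| / 2) ^ 2 ≤ ‖z + (m : ℂ)‖ ^ k := by
    calc (|(m : ℝ)| / 2) ^ 2 ≤ ‖z + (m : ℂ)‖ ^ 2 := by
          apply pow_le_pow_left₀ (by positivity) hlb
      _ ≤ ‖z + (m : ℂ)‖ ^ k := pow_le_pow_right₀ h1le hk
  have hmpos : 0 < |(m : ℝ)| := by linarith
  have hpos : (0 : ℝ) < (|(m : ℝ)| / 2) ^ 2 := by positivity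
  have key : ‖((z + (m : ℂ)) ^ k)⁻¹‖ ≤ ((|(m : ℝ)| / 2) ^ 2)⁻¹ := by
    rw [norm_inv, norm_pow]
    exact inv_anti₀ hpos hpow
  have hfin' : ‖‖((z + (m : ℂ)) ^ k)⁻¹‖‖ ≤ 4 * (1 / (m : ℝ) ^ 2) := by
    rw [norm_norm]
    refine key.trans (le_of_eq ?_)
    rw [div_pow, sq_abs, inv_div, mul_one_div]
    norm_num
  linarith

lemma strictMono_pair {x y : ℤ} (h : x < y) : StrictMono ![x, y] := by
  intro i j hij
  fin_cases i <;> fin_cases j <;>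
    simp_all [Matrix.cons_val_zero, Matrix.cons_val_one, Matrix.head_cons]

noncomputable def Fab (a b : ℕ) (z : ℂ) : ℤ × ℤ → ℂ :=
  fun p => ((z + (p.1 : ℂ)) ^ a)⁻¹ * ((z + (p.2 : ℂ)) ^ b)⁻¹

def eqvLt : {m : Fin 2 → ℤ // StrictMono m} ≃ ↥{p : ℤ × ℤ | p.1 < p.2} where
  toFun m := ⟨(m.1 0, m.1 1), m.2 (by decide : (0 : Fin 2) < 1)⟩
  invFun p := ⟨![p.1.1, p.1.2], strictMono_pair p.2⟩
  left_inv m := Subtype.ext (by funext i; fin_cases i <;> simp)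
  right_inv p := Subtype.ext (by simp)

def eqvGt : {m : Fin 2 → ℤ // StrictMono m} ≃ ↥{p : ℤ × ℤ | p.2 < p.1} where
  toFun m := ⟨(m.1 1, m.1 0), m.2 (by decide : (0 : Fin 2) < 1)⟩
  invFun p := ⟨![p.1.2, p.1.1], strictMono_pair p.2⟩
  left_inv m := Subtype.ext (by funext i; fin_cases i <;> simp)
  right_inv p := Subtype.ext (by simp)

def eqvDiag : ℤ ≃ ↥{p : ℤ × ℤ | p.1 = p.2} where
  toFun n := ⟨(n, n), rfl⟩
  invFun p := p.1.1
  left_inv n := rfl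
  right_inv p := Subtype.ext (by
    have h := p.2
    simp only [Set.mem_setOf_eq] at h
    exact Prod.ext rfl h)

set_option maxHeartbeats 1000000 in
theorem monotangent_mul (a b : ℕ) (ha : 2 ≤ a) (hb : 2 ≤ b)
    (z : ℂ) (hz : ∀ m : ℤ, z ≠ m) :
    Monotangent a z * Monotangent b z =
      Multitangent ![a, b] z + Multitangent ![b, a] z + Monotangent (a + b) z := by
  have hA := summable_norm_mono a ha z
  have hB := summable_norm_mono b hb z
  have hF : Summable (Fab a b z) := by
    apply Summable.of_norm
    simp only [Fab]
    exact Summable.mul_norm (f := fun m : ℤ => ((z + (m : ℂ)) ^ a)⁻¹)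
      (g := fun m : ℤ => ((z + (m : ℂ)) ^ b)⁻¹) hA hB
  have hstep : Monotangent a z * Monotangent b z = ∑' p : ℤ × ℤ, Fab a b z p := by
    rw [Monotangent, Monotangent]
    simp only [Fab]
    exact tsum_mul_tsum_of_summable_norm (f := fun m : ℤ => ((z + (m : ℂ)) ^ a)⁻¹)
      (g := fun m : ℤ => ((z + (m : ℂ)) ^ b)⁻¹) hA hB
  have hdecomp : ∀ p : ℤ × ℤ,
      Fab a b z p = Set.indicator {p : ℤ × ℤ | p.1 < p.2} (Fab a b z) p +
        Set.indicator {p : ℤ × ℤ | p.2 < p.1} (Fab a b z) p +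
        Set.indicator {p : ℤ × ℤ | p.1 = p.2} (Fab a b z) p := by
    intro p
    simp only [Set.indicator_apply, Set.mem_setOf_eq]
    rcases lt_trichotomy p.1 p.2 with h | h | h
    · rw [if_pos h, if_neg (by omega), if_neg (by omega)]; ring
    · rw [if_neg (by omega), if_neg (by omega), if_pos h]; ring
    · rw [if_neg (by omega), if_pos h, if_neg (by omega)]; ring
  have hsum : ∑' p : ℤ × ℤ, Fab a b z p =
      (∑' p : ℤ × ℤ, Set.indicator {p : ℤ × ℤ | p.1 < p.2} (Fab a b z) p) +
      (∑' p : ℤ × ℤ, Set.indicator {p : ℤ × ℤ | p.2 < p.1} (Fab a b z) p) +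
      (∑' p : ℤ × ℤ, Set.indicator {p : ℤ × ℤ | p.1 = p.2} (Fab a b z) p) :=
    calc ∑' p : ℤ × ℤ, Fab a b z p
        = ∑' p : ℤ × ℤ, (Set.indicator {p : ℤ × ℤ | p.1 < p.2} (Fab a b z) p +
            Set.indicator {p : ℤ × ℤ | p.2 < p.1} (Fab a b z) p +
            Set.indicator {p : ℤ × ℤ | p.1 = p.2} (Fab a b z) p) := tsum_congr hdecomp
      _ = (∑' p : ℤ × ℤ, (Set.indicator {p : ℤ × ℤ | p.1 < p.2} (Fab a b z) p +
            Set.indicator {p : ℤ × ℤ | p.2 < p.1} (Fab a b z) p)) +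
          ∑' p : ℤ × ℤ, Set.indicator {p : ℤ × ℤ | p.1 = p.2} (Fab a b z) p :=
        Summable.tsum_add ((hF.indicator _).add (hF.indicator _)) (hF.indicator _)
      _ = _ := by rw [Summable.tsum_add (hF.indicator _) (hF.indicator _)]
  have h₁ : Multitangent ![a, b] z =
      ∑' p : ℤ × ℤ, Set.indicator {p : ℤ × ℤ | p.1 < p.2} (Fab a b z) p := by
    rw [← tsum_subtype, Multitangent,
      ← eqvLt.tsum_eq (fun p : ↥{p : ℤ × ℤ | p.1 < p.2} => Fab a b z p.1)]
    apply tsum_congr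
    intro m
    simp only [eqvLt, Equiv.coe_fn_mk, Fab, Fin.prod_univ_two]
    simp
  have h₂ : Multitangent ![b, a] z =
      ∑' p : ℤ × ℤ, Set.indicator {p : ℤ × ℤ | p.2 < p.1} (Fab a b z) p := by
    rw [← tsum_subtype, Multitangent,
      ← eqvGt.tsum_eq (fun p : ↥{p : ℤ × ℤ | p.2 < p.1} => Fab a b z p.1)]
    apply tsum_congr
    intro m
    simp only [eqvGt, Equiv.coe_fn_mk, Fab, Fin.prod_univ_two]
    simp only [Matrix.cons_val_zero, Matrix.cons_val_one, Matrix.head_cons]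
    ring
  have h₃ : Monotangent (a + b) z =
      ∑' p : ℤ × ℤ, Set.indicator {p : ℤ × ℤ | p.1 = p.2} (Fab a b z) p := by
    rw [← tsum_subtype, Monotangent,
      ← eqvDiag.tsum_eq (fun p : ↥{p : ℤ × ℤ | p.1 = p.2} => Fab a b z p.1)]
    apply tsum_congr
    intro n
    simp only [eqvDiag, Equiv.coe_fn_mk, Fab]
    rw [pow_add, mul_inv]
  rw [hstep, hsum, h₁, h₂, h₃]
end

section
/- For positive integers a with a ≥ 2 and z ∈ ℂ \ ℤ, the value Ψ_a(z)^2 = 2Ψ_{a,a}(z) + Ψ_{2a}(z). -/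
lemma summable_norm_aux (a : ℕ) (ha : 2 ≤ a) (z : ℂ) :
    Summable (fun m : ℤ => ‖((z + (m : ℂ)) ^ a)⁻¹‖) := by
  have hg : Summable (fun m : ℤ => 1 / |(m : ℝ) + z.re| ^ (a : ℝ)) :=
    (Real.summable_one_div_int_add_rpow z.re a).mpr
      (by exact_mod_cast lt_of_lt_of_le one_lt_two (by exact_mod_cast ha))
  apply Summable.of_norm_bounded_eventually hg
  rw [Filter.eventually_cofinite]
  have hfin : {m : ℤ | (m : ℝ) + z.re = 0}.Finite := by
    have hsub : {m : ℤ | (m : ℝ) + z.re = 0} ⊆ (fun m : ℤ => (m : ℝ)) ⁻¹' {-z.re} := by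
      intro m hm; simp only [Set.mem_preimage, Set.mem_singleton_iff]; linarith [hm.out]
    exact Set.Finite.subset (Set.Finite.preimage
      (Set.injOn_of_injective Int.cast_injective) (Set.finite_singleton (-z.re))) hsub
  apply hfin.subset
  intro m hm
  simp only [Set.mem_setOf_eq] at hm ⊢
  by_contra hne
  apply hm
  have h0 : 0 < |(m : ℝ) + z.re| := abs_pos.mpr hne
  have h1 : |(m : ℝ) + z.re| ≤ ‖z + (m : ℂ)‖ := by
    have h2 := Complex.abs_re_le_norm (z + (m : ℂ))
    simpa [add_comm] using h2
  rw [norm_norm, norm_inv, norm_pow, Real.rpow_natCast, one_div]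
  apply inv_anti₀ (pow_pos h0 a)
  exact pow_le_pow_left₀ h0.le (by simpa using h1) a

def swapEquiv : ({p : ℤ × ℤ | p.1 < p.2} : Set (ℤ × ℤ)) ≃ ({p : ℤ × ℤ | p.2 < p.1} : Set (ℤ × ℤ)) :=
  ⟨fun p => ⟨(p.1.2, p.1.1), p.2⟩, fun p => ⟨(p.1.2, p.1.1), p.2⟩, fun p => rfl, fun p => rfl⟩

def diagEquiv : ℤ ≃ ({p : ℤ × ℤ | p.1 = p.2} : Set (ℤ × ℤ)) :=
  ⟨fun m => ⟨(m, m), rfl⟩, fun p => p.1.1, fun m => rfl,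
    fun p => Subtype.ext (Prod.ext rfl p.2)⟩

def ltEquiv : ({p : ℤ × ℤ | p.1 < p.2} : Set (ℤ × ℤ)) ≃ {m : Fin 2 → ℤ // StrictMono m} where
  toFun p := ⟨![p.1.1, p.1.2], by
    intro i j hij
    have hp : p.1.1 < p.1.2 := p.2
    fin_cases i <;> fin_cases j <;> first | exact absurd hij (by decide) | simpa using hp⟩
  invFun m := ⟨(m.1 0, m.1 1), m.2 (by decide)⟩
  left_inv p := rfl
  right_inv m := Subtype.ext (funext fun i => by fin_cases i <;> simp)

theorem monotangent_sq (a : ℕ) (ha : 2 ≤ a) (z : ℂ) (hz : ∀ m : ℤ, z ≠ m) :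
    Monotangent a z ^ 2 = 2 * Multitangent ![a, a] z + Monotangent (2 * a) z := by
  set f : ℤ → ℂ := fun m => ((z + (m : ℂ)) ^ a)⁻¹ with hf_def
  have hfn : Summable (fun m : ℤ => ‖f m‖) := summable_norm_aux a ha z
  set F : ℤ × ℤ → ℂ := fun p => f p.1 * f p.2 with hF_def
  have hFn : Summable (fun p : ℤ × ℤ => ‖F p‖) := hfn.mul_norm hfn
  have hF : Summable F := hFn.of_norm
  have h1 : Monotangent a z ^ 2 = ∑' p : ℤ × ℤ, F p := by
    rw [Monotangent, sq]
    exact tsum_mul_tsum_of_summable_norm hfn hfn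
  let s : Set (ℤ × ℤ) := {p | p.1 < p.2}
  let t : Set (ℤ × ℤ) := {p | p.1 = p.2}
  let u : Set (ℤ × ℤ) := {p | p.2 < p.1}
  have huniv : (Set.univ : Set (ℤ × ℤ)) = s ∪ (t ∪ u) := by
    ext p
    simp only [s, t, u, Set.mem_univ, Set.mem_union, Set.mem_setOf_eq, true_iff]
    omega
  have h2 : ∑' p : ℤ × ℤ, F p = (∑' p : s, F p) + ((∑' p : t, F p) + (∑' p : u, F p)) := by
    rw [← tsum_univ F, huniv, Summable.tsum_union_disjoint (s := s) (t := t ∪ u) ?d1 (hF.subtype s) (hF.subtype _),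
      Summable.tsum_union_disjoint (s := t) (t := u) ?d2 (hF.subtype t) (hF.subtype u)]
    case d2 =>
      rw [Set.disjoint_left]
      intro p hp hp'
      simp only [t, u, Set.mem_setOf_eq] at hp hp'; omega
    case d1 =>
      rw [Set.disjoint_left]
      intro p hp hp'
      simp only [s, t, u, Set.mem_union, Set.mem_setOf_eq] at hp hp'; omega
  -- the swap equivalence
  have hut : ∑' p : u, F p = ∑' p : s, F p := by
    rw [← Equiv.tsum_eq swapEquiv (fun p : u => F p)]
    refine tsum_congr fun p => ?_
    have he : ((swapEquiv p : ℤ × ℤ)) = (p.1.2, p.1.1) := rfl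
    simp only [hF_def, he]
    exact mul_comm _ _
  -- diagonal
  have hdiag : ∑' p : t, F p = Monotangent (2 * a) z := by
    rw [← Equiv.tsum_eq diagEquiv (fun p : t => F p), Monotangent]
    refine tsum_congr fun m => ?_
    have he : ((diagEquiv m : ℤ × ℤ)) = (m, m) := rfl
    simp only [hF_def, he, hf_def]
    rw [two_mul, pow_add, mul_inv]
  -- strictly increasing part
  have hlt : ∑' p : s, F p = Multitangent ![a, a] z := by
    rw [Multitangent, ← Equiv.tsum_eq ltEquiv]
    refine tsum_congr fun p => ?_
    have he : ((ltEquiv p : Fin 2 → ℤ)) = ![p.1.1, p.1.2] := rfl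
    rw [he, Fin.prod_univ_two]
    simp [hF_def, hf_def]
  rw [h1, h2, hut, hdiag, hlt]
  ring
end
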